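/- If u is a vertex of P(G,b), then |{e ∈ E : u_e > 0}| ≤ |V| − B, where B is the number of bipartite connected components of G. -/

import Mathlib

open Finset
open scoped Classical

variable {V E : Type}

/-- Adjacency in a multigraph given by its endpoint function. -/
def Adj (ends : E → Sym2 V) (u w : V) : Prop := ∃ e, ends e = s(u, w)

/-- Reachability (walks of any length). -/
def Reach (ends : E → Sym2 V) : V → V → Prop := Relation.ReflTransGen (Adj ends)

/-- The connected component of a vertex, as a vertex set. -/
def component (ends : E → Sym2 V) (v : V) : Set V := {w | Reach ends v w}

/-- Reachability using only edges in `D`. -/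
def ReachOn (ends : E → Sym2 V) (D : Set E) (u w : V) : Prop :=
  Relation.ReflTransGen (fun a b => ∃ e ∈ D, ends e = s(a, b)) u w

/-- Component of `v` in the spanning subgraph with edge set `D`. -/
def componentOn (ends : E → Sym2 V) (D : Set E) (v : V) : Set V := {w | ReachOn ends D v w}

/-- A vertex set is bipartite if it admits a proper 2-colouring of all edges
incident to it (equivalently, no odd cycle inside it). -/
def BipartiteOn (ends : E → Sym2 V) (S : Set V) : Prop :=
  ∃ f : V → Bool, ∀ (e : E) (u w : V), ends e = s(u, w) → u ∈ S → f u ≠ f w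

/-- The number of bipartite connected components. -/
noncomputable def numBipComp [Fintype V] (ends : E → Sym2 V) : ℕ :=
  Set.ncard {S : Set V | (∃ v, S = component ends v) ∧ BipartiteOn ends S}

/-- The real incidence matrix: entry `(v, e)` is `1` iff `v` is an endpoint of `e`
(a loop contributes a single `1`). -/
noncomputable def incMatrix (ends : E → Sym2 V) : Matrix V E ℝ :=
  fun v e => if v ∈ ends e then (1 : ℝ) else 0

/-- Degree of `v` in the edge set `F`, with loops counted twice. -/
noncomputable def degIn (ends : E → Sym2 V) (F : Finset E) (v : V) : ℕ :=
  ∑ e ∈ F, (if ends e = s(v, v) then 2 else if v ∈ ends e then 1 else 0)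

/-- An edge set is a cycle iff it is nonempty, every vertex has degree 0 or 2 in it,
and its support is connected via its edges.  This includes loops (length-1 cycles)
and pairs of parallel edges (length-2 cycles). -/
def IsCycle (ends : E → Sym2 V) (F : Finset E) : Prop :=
  F.Nonempty ∧ (∀ v : V, degIn ends F v = 0 ∨ degIn ends F v = 2) ∧
    ∀ u w : V, (∃ e ∈ F, u ∈ ends e) → (∃ e ∈ F, w ∈ ends e) → ReachOn ends (↑F) u w

/-- The cycles whose edges lie in `D` and whose vertices lie in `S`. -/
def CyclesIn (ends : E → Sym2 V) (D : Set E) (S : Set V) : Set (Finset E) :=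
  {F | IsCycle ends F ∧ (∀ e ∈ F, e ∈ D) ∧ ∀ e ∈ F, ∀ v : V, v ∈ ends e → v ∈ S}

/-- The part of the graph with edges in `D` and vertices in `S` is acyclic, or
contains exactly one cycle with that cycle having odd length. -/
def AcyclicOrOneOdd (ends : E → Sym2 V) (D : Set E) (S : Set V) : Prop :=
  CyclesIn ends D S = ∅ ∨ ∃ F : Finset E, CyclesIn ends D S = {F} ∧ Odd F.card

/-- The nullity of a real matrix. -/
noncomputable def nullity {α β : Type} [Fintype β] (A : Matrix α β ℝ) : ℕ :=
  Module.finrank ℝ (LinearMap.ker (Matrix.mulVecLin A))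

/-- The fractional perfect `b`-matching polytope of the multigraph. -/
def PGb [Fintype E] (ends : E → Sym2 V) (b : V → ℝ) : Set (E → ℝ) :=
  {x | (∀ e, 0 ≤ x e) ∧ ∀ v : V, ∑ e : E, (if v ∈ ends e then x e else 0) = b v}

/- ### Auxiliary lemmas -/

lemma adj_symm' (ends : E → Sym2 V) : Symmetric (Adj ends) := by
  rintro a b ⟨e, he⟩
  exact ⟨e, by rw [he, Sym2.eq_swap]⟩

lemma mem_component_self' (ends : E → Sym2 V) (v : V) : v ∈ component ends v :=
  Relation.ReflTransGen.refl

lemma component_eq_of_mem' {ends : E → Sym2 V} {v w : V} (h : w ∈ component ends v) :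
    component ends v = component ends w := by
  have hsymm : ∀ {a b : V}, Relation.ReflTransGen (Adj ends) a b →
      Relation.ReflTransGen (Adj ends) b a := fun hab => by
    induction hab with
    | refl => exact Relation.ReflTransGen.refl
    | tail _ hbc ih => exact Relation.ReflTransGen.head (adj_symm' ends hbc) ih
  ext x
  exact ⟨fun hx => Relation.ReflTransGen.trans (hsymm h) hx,
    fun hx => Relation.ReflTransGen.trans h hx⟩

lemma comp_adj_closed {ends : E → Sym2 V} {v a b : V} {e : E}
    (he : ends e = s(a, b)) (ha : a ∈ component ends v) : b ∈ component ends v :=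
  Relation.ReflTransGen.tail ha ⟨e, he⟩

lemma sym2_exists_rep (q : Sym2 V) : ∃ a b, q = s(a, b) :=
  q.inductionOn fun a b => ⟨a, b, rfl⟩

lemma sum_ite_sym2 [Fintype V] (g : V → ℝ) (a b : V) :
    ∑ v, (if v ∈ s(a, b) then g v else 0) = if a = b then g a else g a + g b := by
  classical
  by_cases hab : a = b
  · subst hab
    rw [if_pos rfl]
    have h : ∀ v : V, (if v ∈ s(a, a) then g v else 0) = (if v = a then g v else 0) := by
      intro v
      simp [Sym2.mem_iff]
    rw [Finset.sum_congr rfl fun v _ => h v, Finset.sum_ite_eq' Finset.univ a g,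
      if_pos (Finset.mem_univ a)]
  · rw [if_neg hab]
    have h : ∀ v : V, (if v ∈ s(a, b) then g v else 0)
        = (if v = a then g v else 0) + (if v = b then g v else 0) := by
      intro v
      by_cases h1 : v = a <;> by_cases h2 : v = b <;> simp_all [Sym2.mem_iff]
    rw [Finset.sum_congr rfl fun v _ => h v, Finset.sum_add_distrib,
      Finset.sum_ite_eq' Finset.univ a g, Finset.sum_ite_eq' Finset.univ b g,
      if_pos (Finset.mem_univ a), if_pos (Finset.mem_univ b)]

lemma comp_orth [Fintype V] {ends : E → Sym2 V} {S : Set V} {f : V → Bool}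
    (hcomp : ∀ (e : E) (a b : V), ends e = s(a, b) → a ∈ S → b ∈ S)
    (hf : ∀ (e : E) (a b : V), ends e = s(a, b) → a ∈ S → f a ≠ f b)
    (e : E) :
    ∑ v, (if v ∈ S then (if f v then (1:ℝ) else -1) else 0)
        * (if v ∈ ends e then (1:ℝ) else 0) = 0 := by
  classical
  obtain ⟨a, b, he⟩ := sym2_exists_rep (ends e)
  have hmul : ∀ v, (if v ∈ S then (if f v then (1:ℝ) else -1) else 0)
      * (if v ∈ ends e then (1:ℝ) else 0)
      = (if v ∈ ends e then (if v ∈ S then (if f v then (1:ℝ) else -1) else 0) else 0) := by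
    intro v; by_cases h : v ∈ ends e <;> simp [h]
  rw [Finset.sum_congr rfl fun v _ => hmul v]
  simp_rw [he]
  rw [sum_ite_sym2]
  by_cases hab : a = b
  · rw [if_pos hab]
    subst hab
    have ha : a ∉ S := fun h => (hf e a a he h) rfl
    simp [ha]
  · rw [if_neg hab]
    by_cases haS : a ∈ S
    · have hbS : b ∈ S := hcomp e a b he haS
      have hfab : f a ≠ f b := hf e a b he haS
      rw [if_pos haS, if_pos hbS]
      cases hA : f a <;> cases hB : f b <;> simp_all
    · have hbS : b ∉ S := fun hb => haS (hcomp e b a (by rw [he, Sym2.eq_swap]) hb)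
      simp [haS, hbS]

theorem vertex_PGb_support_card [Fintype V] [Fintype E] (ends : E → Sym2 V) (b : V → ℝ)
    (hb : ∀ v, 0 ≤ b v) (u : E → ℝ)
    (hu : u ∈ Set.extremePoints ℝ (PGb ends b)) :
    (Set.ncard {e : E | 0 < u e} : ℤ)
      ≤ (Fintype.card V : ℤ) - (numBipComp ends : ℤ) := by
  classical
  obtain ⟨huP, huExt⟩ := hu
  obtain ⟨hu0, husum⟩ := huP
  set s : Set E := {e : E | 0 < u e} with hs
  set C : Set (Set V) := {S : Set V | (∃ v, S = component ends v) ∧ BipartiteOn ends S} with hC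
  haveI : Fintype ↥s := Fintype.ofFinite _
  haveI : Fintype ↥C := Fintype.ofFinite _
  have hmem : ∀ S : ↥C, (∃ v, (S : Set V) = component ends v)
      ∧ BipartiteOn ends (S : Set V) := fun S => S.2
  choose f hf using fun S : ↥C => (hmem S).2
  set wv : ↥C → V → ℝ :=
    fun S v => if v ∈ (S : Set V) then (if f S v then (1:ℝ) else -1) else 0 with hwv
  set col : E → V → ℝ := fun e v => if v ∈ ends e then (1:ℝ) else 0 with hcol
  have hclosed : ∀ S : ↥C, ∀ (e : E) (a c : V),
      ends e = s(a, c) → a ∈ (S : Set V) → c ∈ (S : Set V) := by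
    intro S e a c he ha
    obtain ⟨v, hv⟩ := (hmem S).1
    rw [hv] at ha ⊢
    exact comp_adj_closed he ha
  have horth : ∀ (S : ↥C) (e : E), ∑ v, wv S v * col e v = 0 := by
    intro S e
    exact comp_orth (hclosed S) (fun e a c => hf S e a c) e
  have hdisj : ∀ S T : ↥C, S ≠ T → ∀ v : V, v ∈ (S : Set V) → v ∈ (T : Set V) → False := by
    intro S T hST v hvS hvT
    obtain ⟨a, ha⟩ := (hmem S).1
    obtain ⟨c, hc⟩ := (hmem T).1
    apply hST
    apply Subtype.ext
    rw [ha] at hvS ⊢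
    rw [hc] at hvT ⊢
    exact (component_eq_of_mem' hvS).trans (component_eq_of_mem' hvT).symm
  have hne : ∀ S : ↥C, ∃ v, v ∈ (S : Set V) := by
    intro S
    obtain ⟨a, ha⟩ := (hmem S).1
    exact ⟨a, by rw [ha]; exact mem_component_self' ends a⟩
  have hindep : LinearIndependent ℝ (Sum.elim (fun e : ↥s => col (e : E)) wv) := by
    rw [Fintype.linearIndependent_iff]
    intro c hc0
    have hcv : ∀ v : V, ∑ i, c i * (Sum.elim (fun e : ↥s => col (e : E)) wv) i v = 0 := by
      intro v
      have := congrFun hc0 v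
      simpa [Finset.sum_apply] using this
    have hcomp0 : ∀ T : ↥C, c (Sum.inr T) = 0 := by
      intro T
      have key : ∑ i, c i * ∑ v, wv T v * (Sum.elim (fun e : ↥s => col (e : E)) wv) i v
          = 0 := by
        have swap : ∑ i, c i * ∑ v, wv T v * (Sum.elim (fun e : ↥s => col (e : E)) wv) i v
            = ∑ v, wv T v * ∑ i, c i * (Sum.elim (fun e : ↥s => col (e : E)) wv) i v := by
          simp_rw [Finset.mul_sum]
          rw [Finset.sum_comm]
          exact Finset.sum_congr rfl fun v _ => Finset.sum_congr rfl fun i _ => by ring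
        rw [swap]
        simp only [hcv, mul_zero, Finset.sum_const_zero]
      rw [Fintype.sum_sum_type] at key
      simp only [Sum.elim_inl, Sum.elim_inr] at key
      have h1 : ∑ e : ↥s, c (Sum.inl e) * ∑ v, wv T v * col (e : E) v = 0 :=
        Finset.sum_eq_zero fun e _ => by rw [horth T (e : E), mul_zero]
      have h2 : ∀ S : ↥C, S ≠ T → ∑ v, wv T v * wv S v = 0 := by
        intro S hST
        apply Finset.sum_eq_zero
        intro v _
        by_cases hvT : v ∈ (T : Set V)
        · have hvS : v ∉ (S : Set V) := fun h => hdisj S T hST v h hvT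
          simp [hwv, hvS]
        · simp [hwv, hvT]
      have h3 : ∑ v, wv T v * wv T v = ∑ v, (if v ∈ (T : Set V) then (1:ℝ) else 0) := by
        apply Finset.sum_congr rfl
        intro v _
        by_cases hv : v ∈ (T : Set V)
        · by_cases hfv : f T v <;> simp [hwv, hv, hfv]
        · simp [hwv, hv]
      have h3pos : 0 < ∑ v, (if v ∈ (T : Set V) then (1:ℝ) else 0) := by
        obtain ⟨v0, hv0⟩ := hne T
        apply Finset.sum_pos'
        · intro v _; split <;> norm_num
        · exact ⟨v0, Finset.mem_univ _, by simp [hv0]⟩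
      have hsum2 : ∑ S : ↥C, c (Sum.inr S) * ∑ v, wv T v * wv S v
          = c (Sum.inr T) * ∑ v, wv T v * wv T v := by
        apply Finset.sum_eq_single T
        · intro S _ hST; rw [h2 S hST, mul_zero]
        · intro h; exact absurd (Finset.mem_univ T) h
      rw [h1, hsum2, zero_add, h3] at key
      rcases mul_eq_zero.mp key with h | h
      · exact h
      · exact absurd h (ne_of_gt h3pos)
    have hinl : ∀ e0 : ↥s, c (Sum.inl e0) = 0 := by
      intro e0
      by_contra hce
      set y : E → ℝ := fun e' => if h : e' ∈ s then c (Sum.inl ⟨e', h⟩) else 0 with hy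
      have hyc : ∀ e1 : ↥s, y (e1 : E) = c (Sum.inl e1) := fun e1 => by
        simp only [hy, dif_pos e1.2, Subtype.coe_eta]
      have hyzero : ∀ e', e' ∉ s → y e' = 0 := by
        intro e' h; simp only [hy, dif_neg h]
      have hcolsum : ∀ v : V, ∑ e' : E, (if v ∈ ends e' then y e' else 0) = 0 := by
        intro v
        have hv := hcv v
        rw [Fintype.sum_sum_type] at hv
        simp only [Sum.elim_inl, Sum.elim_inr] at hv
        have hz : ∑ S : ↥C, c (Sum.inr S) * wv S v = 0 :=
          Finset.sum_eq_zero fun S _ => by rw [hcomp0 S, zero_mul]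
        rw [hz, add_zero] at hv
        have step1 : ∀ e' : E, (if v ∈ ends e' then y e' else 0) = y e' * col e' v := by
          intro e'
          by_cases h : v ∈ ends e' <;> simp [hcol, h]
        rw [Finset.sum_congr rfl fun e' _ => step1 e']
        have step2 : ∑ e' : E, y e' * col e' v = ∑ e' ∈ s.toFinset, y e' * col e' v := by
          symm
          apply Finset.sum_subset (Finset.subset_univ _)
          intro e' _ he'
          rw [hyzero e' (by simpa using he'), zero_mul]
        rw [step2, ← Finset.sum_set_coe]
        calc ∑ e1 : ↥s, y (e1 : E) * col (e1 : E) v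
            = ∑ e1 : ↥s, c (Sum.inl e1) * col (e1 : E) v :=
              Finset.sum_congr rfl fun e1 _ => by rw [hyc e1]
          _ = 0 := hv
      -- construct perturbations
      set t : Finset E := s.toFinset with ht
      have htne : t.Nonempty := ⟨(e0 : E), by simp [ht, Set.mem_toFinset]⟩
      set ε : ℝ := t.inf' htne fun e' => u e' / (|y e'| + 1) with hε
      have hεpos : 0 < ε := by
        rw [hε, Finset.lt_inf'_iff]
        intro e' he'
        have hue : 0 < u e' := by
          have : e' ∈ s := by simpa [ht, Set.mem_toFinset] using he'
          exact this
        positivity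
      have hbound : ∀ e', ε * |y e'| < u e' ∨ y e' = 0 := by
        intro e'
        by_cases hes : e' ∈ s
        · left
          have h1 : ε ≤ u e' / (|y e'| + 1) :=
            Finset.inf'_le _ (by simp [ht, Set.mem_toFinset, hes])
          have h2 : 0 < |y e'| + 1 := by positivity
          have h3 : ε * (|y e'| + 1) ≤ u e' := by
            rw [← le_div_iff₀ h2]; exact h1
          nlinarith [abs_nonneg (y e')]
        · right; exact hyzero e' hes
      have hnn : ∀ e' : E, 0 ≤ u e' - ε * y e' ∧ 0 ≤ u e' + ε * y e' := by
        intro e'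
        rcases hbound e' with h | h
        · have hy1 : y e' ≤ |y e'| := le_abs_self _
          have hy2 : -|y e'| ≤ y e' := neg_abs_le _
          constructor <;> nlinarith
        · rw [h]; simp [hu0 e']
      set u₁ : E → ℝ := fun e' => u e' - ε * y e' with hu₁
      set u₂ : E → ℝ := fun e' => u e' + ε * y e' with hu₂
      have hsum1 : ∀ v : V, ∑ e' : E, (if v ∈ ends e' then u₁ e' else 0) = b v := by
        intro v
        have step : ∀ e' : E, (if v ∈ ends e' then u₁ e' else 0)
            = (if v ∈ ends e' then u e' else 0) - ε * (if v ∈ ends e' then y e' else 0) := by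
          intro e'; by_cases h : v ∈ ends e' <;> simp [hu₁, h]
        rw [Finset.sum_congr rfl fun e' _ => step e', Finset.sum_sub_distrib,
          ← Finset.mul_sum, hcolsum v, mul_zero, sub_zero]
        exact husum v
      have hsum2 : ∀ v : V, ∑ e' : E, (if v ∈ ends e' then u₂ e' else 0) = b v := by
        intro v
        have step : ∀ e' : E, (if v ∈ ends e' then u₂ e' else 0)
            = (if v ∈ ends e' then u e' else 0) + ε * (if v ∈ ends e' then y e' else 0) := by
          intro e'; by_cases h : v ∈ ends e' <;> simp [hu₂, h]
        rw [Finset.sum_congr rfl fun e' _ => step e', Finset.sum_add_distrib,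
          ← Finset.mul_sum, hcolsum v, mul_zero, add_zero]
        exact husum v
      have hm1 : u₁ ∈ PGb ends b := ⟨fun e' => (hnn e').1, hsum1⟩
      have hm2 : u₂ ∈ PGb ends b := ⟨fun e' => (hnn e').2, hsum2⟩
      have hseg : u ∈ openSegment ℝ u₁ u₂ := by
        refine ⟨1/2, 1/2, by norm_num, by norm_num, by norm_num, ?_⟩
        funext e'
        simp only [Pi.add_apply, Pi.smul_apply, smul_eq_mul, hu₁, hu₂]
        ring
      have := huExt hm1 hm2 hseg
      have heq := congrFun this (e0 : E)
      simp only [hu₁] at heq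
      have hyne : y (e0 : E) ≠ 0 := by rw [hyc e0]; exact hce
      have : ε * y (e0 : E) = 0 := by linarith
      rcases mul_eq_zero.mp this with h | h
      · exact absurd h (ne_of_gt hεpos)
      · exact hyne h
    rintro (e0 | T)
    · exact hinl e0
    · exact hcomp0 T
  have hcard := hindep.fintype_card_le_finrank
  rw [Module.finrank_fintype_fun_eq_card, Fintype.card_sum] at hcard
  have h1 : s.ncard = Fintype.card ↥s := by
    rw [Set.ncard_eq_toFinset_card', Set.toFinset_card]
  have h2 : numBipComp ends = Fintype.card ↥C := by
    unfold numBipComp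
    rw [← hC, Set.ncard_eq_toFinset_card', Set.toFinset_card]
  rw [h1, h2]
  push_cast
  omega
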